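/- If ℋ ⊆ 𝒞 is an admissible family and h_ℋ is the corresponding canonical height function, then every member of ℋ is a pre-island with respect to (𝒞, 𝒦, h_ℋ). -/

import Mathlib

open Finset

variable {U : Type*}

/-- `K` covers `S` in the poset `(𝒦, ⊆)`. -/
def Covers (𝒦 : Finset (Finset U)) (S K : Finset U) : Prop :=
  S ⊂ K ∧ ∀ K' ∈ 𝒦, S ⊂ K' → ¬K' ⊂ K

/-- `min h(K) < min h(S)` (for nonempty finite `S`, `K`). -/
def MinLt (h : U → ℝ) (K S : Finset U) : Prop :=
  ∃ k ∈ K, ∀ s ∈ S, h k < h s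

/-- `S` is a pre-island with respect to `(𝒞, 𝒦, h)`. -/
def IsPreIsland (𝒞 𝒦 : Finset (Finset U)) (h : U → ℝ) (S : Finset U) : Prop :=
  S ∈ 𝒞 ∧ S.Nonempty ∧ ∀ K ∈ 𝒦, Covers 𝒦 S K → MinLt h K S

/-- `S` is an island with respect to `(𝒞, 𝒦, h)`. -/
def IsIsland [DecidableEq U] (𝒞 𝒦 : Finset (Finset U)) (h : U → ℝ) (S : Finset U) : Prop :=
  S ∈ 𝒞 ∧ S.Nonempty ∧ ∀ K ∈ 𝒦, Covers 𝒦 S K → ∀ u ∈ K \ S, ∀ s ∈ S, h u < h s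

/-- `(𝒞, 𝒦)` is an island domain on `U`. -/
def IslandDomain [Fintype U] (𝒞 𝒦 : Finset (Finset U)) : Prop :=
  𝒞 ⊆ 𝒦 ∧ Finset.univ ∈ 𝒞

/-- `ℋ` is admissible with respect to `(𝒞, 𝒦)`. -/
def Admissible [DecidableEq U] [Fintype U] (𝒞 𝒦 ℋ : Finset (Finset U)) : Prop :=
  ℋ ⊆ 𝒞 ∧ (∅ : Finset U) ∉ ℋ ∧ Finset.univ ∈ ℋ ∧
    ∀ 𝒜 ⊆ ℋ, 𝒜.Nonempty → (∀ A ∈ 𝒜, ∀ B ∈ 𝒜, A ⊆ B → A = B) →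
      ∃ H ∈ 𝒜, ∀ K ∈ 𝒦, H ⊂ K → ¬K ⊆ 𝒜.sup id

/-- `𝒮` is the system of pre-islands corresponding to `(𝒞, 𝒦, h)` for some `h`. -/
def IsSystemOfPreIslands (𝒞 𝒦 𝒮 : Finset (Finset U)) : Prop :=
  ∃ h : U → ℝ, ∀ S, S ∈ 𝒮 ↔ IsPreIsland 𝒞 𝒦 h S

/-- `𝒮` is the system of islands corresponding to `(𝒞, 𝒦, h)` for some `h`. -/
def IsSystemOfIslands [DecidableEq U] (𝒞 𝒦 𝒮 : Finset (Finset U)) : Prop :=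
  ∃ h : U → ℝ, ∀ S, S ∈ 𝒮 ↔ IsIsland 𝒞 𝒦 h S

/-- `(𝒞, 𝒦)` is a connective island domain. -/
def Connective [DecidableEq U] (𝒞 𝒦 : Finset (Finset U)) : Prop :=
  ∀ A ∈ 𝒞, ∀ B ∈ 𝒞, (A ∩ B).Nonempty → ¬B ⊆ A → ∃ K ∈ 𝒦, A ⊂ K ∧ K ⊆ A ∪ B

/-- Any two members are comparable or disjoint. -/
def CDIndependent [DecidableEq U] (ℋ : Finset (Finset U)) : Prop :=
  ∀ A ∈ ℋ, ∀ B ∈ ℋ, A ⊆ B ∨ B ⊆ A ∨ A ∩ B = ∅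

def WeaklyIndependent [DecidableEq U] (ℋ : Finset (Finset U)) : Prop :=
  ∀ H ∈ ℋ, ∀ 𝒢 ⊆ ℋ, 𝒢.Nonempty → H ⊆ 𝒢.sup id → ∃ G ∈ 𝒢, H ⊆ G

def CDWIndependent [DecidableEq U] (ℋ : Finset (Finset U)) : Prop :=
  CDIndependent ℋ ∧ WeaklyIndependent ℋ

/-- The proximity relation `δ`: `A δ B` iff some `K ∈ 𝒦` with `A ⪯ K` meets `B`. -/
def Delta [DecidableEq U] (𝒦 : Finset (Finset U)) (A B : Finset U) : Prop :=
  ∃ K ∈ 𝒦, (K = A ∨ Covers 𝒦 A K) ∧ (K ∩ B).Nonempty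

def Distant [DecidableEq U] (𝒦 : Finset (Finset U)) (A B : Finset U) : Prop :=
  ¬Delta 𝒦 A B ∧ ¬Delta 𝒦 B A

/-- Any two incomparable members of `ℋ` are distant. -/
def DistantFamily [DecidableEq U] (𝒦 ℋ : Finset (Finset U)) : Prop :=
  ∀ A ∈ ℋ, ∀ B ∈ ℋ, ¬A ⊆ B → ¬B ⊆ A → Distant 𝒦 A B

/-- A proximity domain: connective and `δ` symmetric on nonempty members of `𝒞`. -/
def ProximityDomain [DecidableEq U] (𝒞 𝒦 : Finset (Finset U)) : Prop :=
  Connective 𝒞 𝒦 ∧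
    ∀ A ∈ 𝒞, ∀ B ∈ 𝒞, A.Nonempty → B.Nonempty → (Delta 𝒦 A B ↔ Delta 𝒦 B A)

/-- The recursive partition `ℋ = ℋ⁽⁰⁾ ∪ ⋯ ∪ ℋ⁽ʳ⁾` defining the canonical height function:
`ℋ⁽⁰⁾ = {U}`, and `ℋ⁽ⁱ⁾` consists of those not-yet-used members `H` such that no `K ∈ 𝒦`
with `H ⊊ K` is contained in the union of the not-yet-used members. -/
def levels [Fintype U] [DecidableEq U] (𝒦 ℋ : Finset (Finset U)) : ℕ → Finset (Finset U)
  | 0 => {Finset.univ}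
  | (i + 1) =>
      (ℋ \ (Finset.range (i + 1)).attach.sup fun j => levels 𝒦 ℋ j.1).filter fun H =>
        ∀ K ∈ 𝒦, H ⊂ K →
          ¬K ⊆ (ℋ \ (Finset.range (i + 1)).attach.sup fun j => levels 𝒦 ℋ j.1).sup id
  decreasing_by all_goals exact Finset.mem_range.mp j.2

/-- The canonical height function `h_ℋ(x) = max { i : x ∈ ⋃ ℋ⁽ⁱ⁾ }`. -/
noncomputable def canonicalHeight [Fintype U] [DecidableEq U] (𝒦 ℋ : Finset (Finset U))
    (x : U) : ℝ :=
  ((((Finset.range (ℋ.card + 1)).filter fun i => x ∈ (levels 𝒦 ℋ i).sup id).sup id : ℕ) : ℝ)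


namespace AdmissibleAux
set_option maxHeartbeats 1000000
set_option linter.unusedSectionVars false

variable [Fintype U] [DecidableEq U]

/-- The remaining members of `ℋ` after levels `0, …, i-1` have been removed. -/
def rem (𝒦 ℋ : Finset (Finset U)) (i : ℕ) : Finset (Finset U) :=
  ℋ \ (Finset.range i).sup (levels 𝒦 ℋ)

lemma levels_succ (𝒦 ℋ : Finset (Finset U)) (i : ℕ) :
    levels 𝒦 ℋ (i + 1) = (rem 𝒦 ℋ (i + 1)).filter fun H =>
      ∀ K ∈ 𝒦, H ⊂ K → ¬K ⊆ (rem 𝒦 ℋ (i + 1)).sup id := by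
  rw [levels, rem, Finset.sup_attach]

lemma levels_subset_rem (𝒦 ℋ : Finset (Finset U)) (i : ℕ) :
    levels 𝒦 ℋ (i + 1) ⊆ rem 𝒦 ℋ (i + 1) := by
  rw [levels_succ]; exact Finset.filter_subset _ _

lemma rem_succ (𝒦 ℋ : Finset (Finset U)) (i : ℕ) :
    rem 𝒦 ℋ (i + 1) = rem 𝒦 ℋ i \ levels 𝒦 ℋ i := by
  ext A
  simp only [rem, Finset.mem_sdiff, Finset.range_add_one, Finset.sup_insert, Finset.mem_union,
    Finset.mem_sup, sup_eq_union, Finset.mem_range]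
  constructor
  · rintro ⟨hA, h⟩
    exact ⟨⟨hA, fun ⟨w, hw, hAw⟩ => h (Or.inr ⟨w, hw, hAw⟩)⟩, fun hAi => h (Or.inl hAi)⟩
  · rintro ⟨⟨hA, h⟩, h2⟩
    exact ⟨hA, fun hc => hc.elim h2 fun ⟨w, hw, hAw⟩ => h ⟨w, hw, hAw⟩⟩

lemma rem_antitone (𝒦 ℋ : Finset (Finset U)) {i j : ℕ} (h : i ≤ j) :
    rem 𝒦 ℋ j ⊆ rem 𝒦 ℋ i := by
  induction j with
  | zero => simp_all
  | succ n ih =>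
    rcases Nat.eq_or_lt_of_le h with rfl | h'
    · exact Finset.Subset.refl _
    · exact (rem_succ 𝒦 ℋ n ▸ Finset.sdiff_subset).trans (ih (Nat.lt_succ_iff.mp h'))

/-- Any element of a finite family lies below a maximal element. -/
lemma exists_maximal_above (s : Finset (Finset U)) {A : Finset U} (hA : A ∈ s) :
    ∃ B ∈ s, A ⊆ B ∧ ∀ C ∈ s, B ⊆ C → B = C := by
  obtain ⟨B, hB, hmax⟩ := (s.filter fun B => A ⊆ B).exists_maximal
    ⟨A, Finset.mem_filter.2 ⟨hA, Finset.Subset.refl A⟩⟩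
  rw [Finset.mem_filter] at hB
  refine ⟨B, hB.1, hB.2, fun C hC hBC => ?_⟩
  by_contra hne
  exact hne (le_antisymm hBC (hmax (Finset.mem_filter.2 ⟨hC, hB.2.trans hBC⟩) hBC))

/-- If anything remains at stage `i+1`, level `i+1` is nonempty. -/
lemma levels_nonempty (𝒞 𝒦 ℋ : Finset (Finset U)) (hadm : Admissible 𝒞 𝒦 ℋ) (i : ℕ)
    (hne : (rem 𝒦 ℋ (i + 1)).Nonempty) : (levels 𝒦 ℋ (i + 1)).Nonempty := by
  set R := rem 𝒦 ℋ (i + 1) with hR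
  set 𝒜 := R.filter fun A => ∀ C ∈ R, A ⊆ C → A = C with h𝒜
  have h𝒜R : 𝒜 ⊆ R := Finset.filter_subset _ _
  have hRH : R ⊆ ℋ := Finset.sdiff_subset
  have h𝒜ne : 𝒜.Nonempty := by
    obtain ⟨A, hA⟩ := hne
    obtain ⟨B, hB, -, hmax⟩ := exists_maximal_above R hA
    exact ⟨B, Finset.mem_filter.2 ⟨hB, hmax⟩⟩
  have hsup : 𝒜.sup id = R.sup id := by
    apply le_antisymm (Finset.sup_mono h𝒜R)
    intro x hx
    obtain ⟨A, hA, hxA⟩ := Finset.mem_sup.1 hx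
    obtain ⟨B, hB, hAB, hmax⟩ := exists_maximal_above R hA
    exact Finset.mem_sup.2 ⟨B, Finset.mem_filter.2 ⟨hB, hmax⟩, hAB hxA⟩
  obtain ⟨H, hH𝒜, hHK⟩ := hadm.2.2.2 𝒜 (h𝒜R.trans hRH) h𝒜ne
    (fun A hA B hB hAB => (Finset.mem_filter.1 hA).2 B (h𝒜R hB) hAB)
  refine ⟨H, ?_⟩
  rw [levels_succ, Finset.mem_filter]
  exact ⟨h𝒜R hH𝒜, fun K hK hHK' => hsup ▸ hHK K hK hHK'⟩

lemma rem_empty (𝒞 𝒦 ℋ : Finset (Finset U)) (hadm : Admissible 𝒞 𝒦 ℋ) :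
    rem 𝒦 ℋ (ℋ.card + 1) = ∅ := by
  have key : ∀ n : ℕ, (rem 𝒦 ℋ (n + 1)).card + n ≤ ℋ.card ∨ rem 𝒦 ℋ (n + 1) = ∅ := by
    intro n
    induction n with
    | zero =>
      have hsub : rem 𝒦 ℋ 1 ⊆ ℋ := Finset.sdiff_subset
      exact Or.inl (by simpa using Finset.card_le_card hsub)
    | succ m ih =>
      rcases ih with h | h
      · rcases Finset.eq_empty_or_nonempty (rem 𝒦 ℋ (m + 1)) with he | hne
        · exact Or.inr (by rw [rem_succ, he]; simp)
        · left
          obtain ⟨L, hL⟩ := levels_nonempty 𝒞 𝒦 ℋ hadm m hne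
          have hlt : (rem 𝒦 ℋ (m + 1 + 1)).card < (rem 𝒦 ℋ (m + 1)).card := by
            apply Finset.card_lt_card
            rw [rem_succ 𝒦 ℋ (m + 1)]
            exact ⟨Finset.sdiff_subset, fun hsub =>
              (Finset.mem_sdiff.1 (hsub (levels_subset_rem 𝒦 ℋ m hL))).2 hL⟩
          omega
      · exact Or.inr (by rw [rem_succ, h]; simp)
  rcases key ℋ.card with h | h
  · exact Finset.card_eq_zero.1 (by omega)
  · exact h

lemma exists_level (𝒞 𝒦 ℋ : Finset (Finset U)) (hadm : Admissible 𝒞 𝒦 ℋ)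
    {H : Finset U} (hH : H ∈ ℋ) : ∃ j ≤ ℋ.card, H ∈ levels 𝒦 ℋ j := by
  have h0 := rem_empty 𝒞 𝒦 ℋ hadm
  have : H ∉ rem 𝒦 ℋ (ℋ.card + 1) := by rw [h0]; exact Finset.notMem_empty H
  rw [rem, Finset.mem_sdiff, not_and, not_not] at this
  obtain ⟨j, hj, hHj⟩ := Finset.mem_sup.1 (this hH)
  exact ⟨j, Nat.lt_succ_iff.mp (Finset.mem_range.1 hj), hHj⟩

lemma height_ge (𝒦 ℋ : Finset (Finset U)) {H : Finset U} {j : ℕ} (hj : j ≤ ℋ.card)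
    (hH : H ∈ levels 𝒦 ℋ j) {x : U} (hx : x ∈ H) : (j : ℝ) ≤ canonicalHeight 𝒦 ℋ x := by
  have hmem : j ∈ (Finset.range (ℋ.card + 1)).filter (fun i => x ∈ (levels 𝒦 ℋ i).sup id) := by
    rw [Finset.mem_filter]
    exact ⟨Finset.mem_range.2 (Nat.lt_succ_iff.2 hj), Finset.mem_sup.2 ⟨H, hH, hx⟩⟩
  unfold canonicalHeight
  exact Nat.cast_le.2 (Finset.le_sup (f := id) hmem)

lemma height_lt (𝒦 ℋ : Finset (Finset U)) {k : U} {i : ℕ}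
    (hk : k ∉ (rem 𝒦 ℋ (i + 1)).sup id) : canonicalHeight 𝒦 ℋ k < ((i + 1 : ℕ) : ℝ) := by
  unfold canonicalHeight
  rw [Nat.cast_lt]
  rw [Finset.sup_lt_iff (Nat.succ_pos i)]
  intro j hj
  rw [Finset.mem_filter] at hj
  by_contra hge
  push_neg at hge
  simp only [id_eq] at hge
  obtain ⟨m, rfl⟩ : ∃ m, j = m + 1 := ⟨j - 1, by omega⟩
  have h1 : levels 𝒦 ℋ (m + 1) ⊆ rem 𝒦 ℋ (i + 1) :=
    (levels_subset_rem 𝒦 ℋ m).trans (rem_antitone 𝒦 ℋ (by omega))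
  obtain ⟨L, hL, hkL⟩ := Finset.mem_sup.1 hj.2
  exact hk (Finset.mem_sup.2 ⟨L, h1 hL, hkL⟩)

end AdmissibleAux

open AdmissibleAux in
/-- every member of an admissible family `ℋ` is a pre-island with respect to
the canonical height function of `ℋ`. -/
theorem admissible_preIsland_canonicalHeight [Fintype U] [DecidableEq U] [Nonempty U]
    (𝒞 𝒦 ℋ : Finset (Finset U)) (hdom : IslandDomain 𝒞 𝒦)
    (hadm : Admissible 𝒞 𝒦 ℋ) :
    ∀ H ∈ ℋ, IsPreIsland 𝒞 𝒦 (canonicalHeight 𝒦 ℋ) H := by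
  intro H hH
  refine ⟨hadm.1 hH, Finset.nonempty_iff_ne_empty.2 (fun e => hadm.2.1 (e ▸ hH)), ?_⟩
  intro K hK hcov
  obtain ⟨j, hj, hlev⟩ := exists_level 𝒞 𝒦 ℋ hadm hH
  match j, hlev with
  | 0, hlev =>
    rw [levels] at hlev
    rw [Finset.mem_singleton] at hlev
    subst hlev
    exact absurd (Finset.subset_univ K) hcov.1.not_subset
  | (i + 1), hlev =>
    have hmem := hlev
    rw [levels_succ, Finset.mem_filter] at hmem
    obtain ⟨k, hkK, hk⟩ := Finset.not_subset.1 (hmem.2 K hK hcov.1)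
    refine ⟨k, hkK, fun s hs => lt_of_lt_of_le (height_lt 𝒦 ℋ hk) ?_⟩
    exact height_ge 𝒦 ℋ hj hlev hs
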